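/- arXiv:1908.11009 — 3 statements merged into one kernel-verified Lean document; each statement's English description precedes it below -/
import Mathlib

section
/- For every nonnegative integer n, $B_{n,\lambda}^{(c)}(x,y) = \sum_{k=0}^{n} \sum_{m=0}^{\lfloor k/2\rfloor} \binom{n}{k} B_{n-k,\lambda}(x)\,(-1)^m y^{2m} \lambda^{k-2m} S_1(k,2m)$, where $S_1(k,j)$ denote the (signed) Stirling numbers of the first kind defined by $(\log(1+t))^j/j! = \sum_{k\ge j} S_1(k,j) t^k/k!$. -/
open PowerSeries Finset Complex

/-- The degenerate falling factorial `(x)_{n,λ} = x(x-λ)⋯(x-(n-1)λ)`. -/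
noncomputable def dff (l x : ℂ) (n : ℕ) : ℂ := ∏ j ∈ Finset.range n, (x - j * l)

/-- Exponential generating function of a sequence: `Σ f n * t^n / n!`. -/
noncomputable def egf (f : ℕ → ℂ) : PowerSeries ℂ := PowerSeries.mk fun n => f n / n.factorial

/-- The degenerate exponential `e_λ^x(t) = (1+λt)^{x/λ} = Σ (x)_{n,λ} t^n/n!` as a power series. -/
noncomputable def degExp (l x : ℂ) : PowerSeries ℂ := egf (dff l x)

/-- The degenerate cosine `cos_λ^{(y)}(t) = cos((y/λ) log(1+λt)) = (e_λ^{iy}(t)+e_λ^{-iy}(t))/2`. -/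
noncomputable def degCos (l y : ℂ) : PowerSeries ℂ :=
  PowerSeries.C (R := ℂ) (1/2) * (degExp l (Complex.I * y) + degExp l (-(Complex.I * y)))

/-- The degenerate sine `sin_λ^{(y)}(t) = sin((y/λ) log(1+λt)) = (e_λ^{iy}(t)-e_λ^{-iy}(t))/(2i)`. -/
noncomputable def degSin (l y : ℂ) : PowerSeries ℂ :=
  PowerSeries.C (R := ℂ) (1/(2*Complex.I)) * (degExp l (Complex.I * y) - degExp l (-(Complex.I * y)))

/-- The exponential series `e^{at} = Σ a^n t^n/n!`. -/
noncomputable def expS (a : ℂ) : PowerSeries ℂ := egf (fun n => a ^ n)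

/-- The series of `log(1+t)`. -/
noncomputable def logS : PowerSeries ℂ := PowerSeries.mk fun n => if n = 0 then 0 else (-1)^(n+1) / n


lemma coeff_egf (f : ℕ → ℂ) (n : ℕ) : (coeff n) (egf f) = f n / n.factorial := by
  simp [egf]

-- (1+X) * logS' = 1
lemma key : (1 + X) * (d⁄dX ℂ logS) = 1 := by
  ext n
  rw [add_mul, one_mul, map_add]
  cases n with
  | zero => simp [coeff_derivative, logS]
  | succ n =>
    rw [coeff_succ_X_mul, coeff_derivative, coeff_derivative]
    have h1 : ((n:ℂ)+1) ≠ 0 := Nat.cast_add_one_ne_zero n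
    have h2 : ((n:ℂ)+1+1) ≠ 0 := by
      have : ((n+1 : ℕ):ℂ)+1 ≠ 0 := Nat.cast_add_one_ne_zero (n+1)
      push_cast at this; exact this
    simp only [logS, coeff_mk, Nat.succ_ne_zero, if_false, PowerSeries.coeff_one]
    push_cast
    field_simp
    ring

lemma coeff_rec (j k : ℕ) :
    ((k:ℂ)+1) * coeff (k+1) (logS^(j+1)) + (k:ℂ) * coeff k (logS^(j+1))
      = ((j:ℂ)+1) * coeff k (logS^j) := by
  have h : (1 + X) * d⁄dX ℂ (logS ^ (j+1)) = (j+1 : ℕ) • logS ^ j := by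
    rw [Derivation.leibniz_pow, Nat.add_sub_cancel, smul_eq_mul, mul_smul_comm,
      mul_left_comm, key, mul_one]
  have h2 := congrArg (coeff k) h
  rw [add_mul, one_mul, map_add, map_nsmul, nsmul_eq_mul] at h2
  push_cast at h2
  cases k with
  | zero =>
    simp only [Nat.cast_zero, zero_add, zero_mul, add_zero]
    rw [coeff_derivative] at h2
    simpa using h2
  | succ k =>
    rw [coeff_succ_X_mul, coeff_derivative, coeff_derivative] at h2
    push_cast at h2 ⊢
    linear_combination h2

section S1sec
variable (S1 : ℕ → ℕ → ℂ)
  (hS1 : ∀ j, logS ^ j = PowerSeries.C (R := ℂ) (Nat.factorial j) * egf (fun k => S1 k j))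

include hS1

lemma coeff_logS_pow (j k : ℕ) :
    coeff k (logS ^ j) = (j.factorial : ℂ) * (S1 k j / k.factorial) := by
  rw [hS1 j, coeff_C_mul, coeff_egf]

lemma S1_rec (k j : ℕ) : S1 (k+1) (j+1) = S1 k j - (k:ℂ) * S1 k (j+1) := by
  have h := coeff_rec j k
  rw [coeff_logS_pow S1 hS1, coeff_logS_pow S1 hS1, coeff_logS_pow S1 hS1] at h
  have hk : ((k.factorial : ℂ)) ≠ 0 := Nat.cast_ne_zero.mpr k.factorial_ne_zero
  have hk1 : (((k+1).factorial : ℂ)) ≠ 0 := Nat.cast_ne_zero.mpr (k+1).factorial_ne_zero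
  have hj : ((j.factorial : ℂ)) ≠ 0 := Nat.cast_ne_zero.mpr j.factorial_ne_zero
  have e1 : (((k+1).factorial : ℂ)) = ((k:ℂ)+1) * k.factorial := by
    rw [Nat.factorial_succ]; push_cast; ring
  have e2 : (((j+1).factorial : ℂ)) = ((j:ℂ)+1) * j.factorial := by
    rw [Nat.factorial_succ]; push_cast; ring
  rw [e1, e2] at h
  have hk' : ((k:ℂ)+1) ≠ 0 := Nat.cast_add_one_ne_zero k
  have hj' : ((j:ℂ)+1) ≠ 0 := Nat.cast_add_one_ne_zero j
  field_simp at h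
  have hfac : ((j:ℂ)+1) * (j.factorial:ℂ) * (((k:ℂ)+1) * ((k.factorial:ℂ) * (k.factorial:ℂ))) ≠ 0 :=
    mul_ne_zero (mul_ne_zero hj' hj) (mul_ne_zero hk' (mul_ne_zero hk hk))
  apply mul_left_cancel₀ hfac
  linear_combination ((j:ℂ)+1) * (j.factorial:ℂ) * (((k:ℂ)+1) * ((k.factorial:ℂ) * (k.factorial:ℂ))) * h

lemma S1_zero_col (k : ℕ) : S1 k 0 = if k = 0 then 1 else 0 := by
  have h := coeff_logS_pow S1 hS1 0 k
  rw [pow_zero] at h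
  have hk : ((k.factorial : ℂ)) ≠ 0 := Nat.cast_ne_zero.mpr k.factorial_ne_zero
  rcases Nat.eq_zero_or_pos k with hk0 | hk0
  · subst hk0; simp [Nat.factorial_zero] at h; simp [h]
  · rw [if_neg (Nat.pos_iff_ne_zero.mp hk0)]
    rw [PowerSeries.coeff_one, if_neg (Nat.pos_iff_ne_zero.mp hk0)] at h
    simp [Nat.factorial_zero] at h
    field_simp at h
    exact h.symm.trans (zero_mul _)

lemma S1_vanish (k j : ℕ) (hkj : k < j) : S1 k j = 0 := by
  have hx : (X : ℂ⟦X⟧) ∣ logS := by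
    rw [PowerSeries.X_dvd_iff]; simp [logS, PowerSeries.constantCoeff_mk]
  obtain ⟨g, hg⟩ := hx
  have h := coeff_logS_pow S1 hS1 j k
  rw [hg, mul_pow, PowerSeries.coeff_X_pow_mul', if_neg (not_le.mpr hkj)] at h
  have hk : ((k.factorial : ℂ)) ≠ 0 := Nat.cast_ne_zero.mpr k.factorial_ne_zero
  have hj : ((j.factorial : ℂ)) ≠ 0 := Nat.cast_ne_zero.mpr j.factorial_ne_zero
  field_simp at h
  exact (mul_eq_zero.mp (h.symm.trans (zero_mul _))).resolve_left hj

end S1sec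


section S1sec2
variable (S1 : ℕ → ℕ → ℂ)
  (hS1 : ∀ j, logS ^ j = PowerSeries.C (R := ℂ) (Nat.factorial j) * egf (fun k => S1 k j))
include hS1

lemma dff_expand (l z : ℂ) (k : ℕ) :
    dff l z k = ∑ j ∈ range (k+1), S1 k j * z^j * l^(k-j) := by
  induction k with
  | zero => simp [dff, S1_zero_col S1 hS1]
  | succ k ih =>
    have hdff : dff l z (k+1) = dff l z k * (z - (k:ℂ)*l) := Finset.prod_range_succ _ _
    set A := ∑ j ∈ range (k+1), S1 k j * z^j * l^(k-j) with hA
    set T := ∑ j ∈ range (k+1), S1 k (j+1) * z^(j+1) * l^(k-j) with hT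
    have hU : T + S1 k 0 * l^(k+1) = l * A := by
      have hU1 : ∑ j ∈ range (k+2), S1 k j * z^j * l^(k+1-j)
          = T + S1 k 0 * l^(k+1) := by
        rw [Finset.sum_range_succ']
        simp [hT]
      have hU2 : ∑ j ∈ range (k+2), S1 k j * z^j * l^(k+1-j) = l * A := by
        rw [Finset.sum_range_succ, S1_vanish S1 hS1 k (k+1) (lt_add_one k), hA,
          Finset.mul_sum]
        simp only [zero_mul, add_zero]
        apply Finset.sum_congr rfl
        intro j hj
        rw [mem_range, Nat.lt_succ_iff] at hj
        rw [show k+1-j = (k-j)+1 from by omega]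
        ring
      rw [← hU1, hU2]
    have hZ : ∑ j ∈ range (k+1), S1 k j * z^(j+1) * l^(k-j) = z * A := by
      rw [hA, Finset.mul_sum]
      apply Finset.sum_congr rfl
      intro j _
      ring
    have hmain : ∑ j ∈ range (k+2), S1 (k+1) j * z^j * l^(k+1-j)
        = (∑ j ∈ range (k+1), S1 k j * z^(j+1) * l^(k-j))
          - (k:ℂ) * T := by
      rw [Finset.sum_range_succ', S1_zero_col S1 hS1, if_neg (Nat.succ_ne_zero k)]
      rw [zero_mul, zero_mul, add_zero, hT, Finset.mul_sum, ← Finset.sum_sub_distrib]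
      apply Finset.sum_congr rfl
      intro j _
      rw [S1_rec S1 hS1]
      push_cast
      ring_nf
    have hk0 : (k:ℂ) * S1 k 0 = 0 := by
      cases k with
      | zero => simp
      | succ k => rw [S1_zero_col S1 hS1, if_neg (Nat.succ_ne_zero k)]; ring
    rw [hdff, ih, hmain, hZ]
    linear_combination (k:ℂ) * hU - l^(k+1) * hk0
end S1sec2

lemma sum_even (f : ℕ → ℂ) (k : ℕ) (h : ∀ j, Odd j → f j = 0) :
    ∑ j ∈ range (k+1), f j = ∑ m ∈ range (k/2+1), f (2*m) := by
  have himg : (range (k/2+1)).image (fun m => 2*m) = (range (k+1)).filter (fun j => Even j) := by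
    ext j
    simp only [mem_image, mem_range, mem_filter, Nat.lt_succ_iff]
    constructor
    · rintro ⟨m, hm, rfl⟩
      exact ⟨by omega, even_two_mul m⟩
    · rintro ⟨hj, m, rfl⟩
      exact ⟨m, by omega, by omega⟩
  have h1 : ∑ j ∈ (range (k+1)).filter (fun j => Even j), f j = ∑ j ∈ range (k+1), f j := by
    apply Finset.sum_filter_of_ne
    intro x _ hx
    by_contra hc
    exact hx (h x (Nat.not_even_iff_odd.mp hc))
  rw [← h1, ← himg, Finset.sum_image (by intros a _ b _ hab; simp only at hab; omega)]

section S1sec3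
variable (S1 : ℕ → ℕ → ℂ)
  (hS1 : ∀ j, logS ^ j = PowerSeries.C (R := ℂ) (Nat.factorial j) * egf (fun k => S1 k j))
include hS1

lemma cos_coeff (l y : ℂ) (k : ℕ) :
    (1/2 : ℂ) * (dff l (Complex.I*y) k + dff l (-(Complex.I*y)) k)
      = ∑ m ∈ range (k/2+1), (-1)^m * y^(2*m) * l^(k-2*m) * S1 k (2*m) := by
  rw [dff_expand S1 hS1, dff_expand S1 hS1, ← Finset.sum_add_distrib, Finset.mul_sum]
  rw [sum_even _ k (by
    intro j hj
    rw [Odd.neg_pow hj]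
    ring)]
  apply Finset.sum_congr rfl
  intro m _
  rw [Even.neg_pow (even_two_mul m)]
  have h2 : (Complex.I*y)^(2*m) = (-1)^m * y^(2*m) := by
    rw [mul_pow, pow_mul, Complex.I_sq]
  rw [h2]
  ring
end S1sec3


lemma egf_mul_coeff (f g h : ℕ → ℂ) (heq : egf h = egf f * egf g) (n : ℕ) :
    h n = ∑ k ∈ range (n+1), (n.choose k : ℂ) * f (n-k) * g k := by
  have hc := congrArg (PowerSeries.coeff n) heq
  rw [coeff_egf, PowerSeries.coeff_mul, Finset.Nat.sum_antidiagonal_eq_sum_range_succ_mk] at hc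
  simp only [coeff_egf] at hc
  rw [← Finset.sum_range_reflect] at hc
  have hc2 : h n / n.factorial
      = ∑ k ∈ range (n+1), f (n-k) / (n-k).factorial * (g k / k.factorial) := by
    rw [hc]
    apply Finset.sum_congr rfl
    intro k hk
    rw [mem_range, Nat.lt_succ_iff] at hk
    have e2 : n - (n + 1 - 1 - k) = k := by omega
    have e1 : n + 1 - 1 - k = n - k := by omega
    rw [e2, e1]
  have hn : ((n.factorial : ℂ)) ≠ 0 := Nat.cast_ne_zero.mpr n.factorial_ne_zero
  have : h n = n.factorial * (h n / n.factorial) := by field_simp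
  rw [this, hc2, Finset.mul_sum]
  apply Finset.sum_congr rfl
  intro k hk
  rw [mem_range, Nat.lt_succ_iff] at hk
  rw [Nat.cast_choose ℂ hk]
  have hk1 : ((k.factorial : ℂ)) ≠ 0 := Nat.cast_ne_zero.mpr k.factorial_ne_zero
  have hk2 : (((n-k).factorial : ℂ)) ≠ 0 := Nat.cast_ne_zero.mpr (n-k).factorial_ne_zero
  field_simp

theorem stmt3 (lam x y : ℝ) (B Bc : ℕ → ℂ) (S1 : ℕ → ℕ → ℂ)
    (hB : egf B * (degExp lam (1/2) - degExp lam (-(1/2))) = PowerSeries.X * degExp lam x)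
    (hBc : egf Bc * (degExp lam (1/2) - degExp lam (-(1/2))) =
      PowerSeries.X * degExp lam x * degCos lam y)
    (hS1 : ∀ j, logS ^ j = PowerSeries.C (R := ℂ) (Nat.factorial j) * egf (fun k => S1 k j))
    (n : ℕ) :
    Bc n = ∑ k ∈ Finset.range (n+1), ∑ m ∈ Finset.range (k/2+1),
      (n.choose k : ℂ) * B (n-k) * (-1)^m * (y:ℂ)^(2*m) * (lam:ℂ)^(k-2*m) * S1 k (2*m) := by
  have hDne : degExp (lam:ℂ) (1/2) - degExp (lam:ℂ) (-(1/2)) ≠ 0 := by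
    intro h0
    have h1 := congrArg (PowerSeries.coeff 1) h0
    simp [degExp, coeff_egf, dff, Finset.prod_range_one] at h1
  have hg : egf Bc = egf B * degCos (lam:ℂ) (y:ℂ) := by
    apply mul_right_cancel₀ hDne
    rw [hBc, ← hB]
    ring
  set g : ℕ → ℂ := fun k => ∑ m ∈ range (k/2+1),
    (-1)^m * (y:ℂ)^(2*m) * (lam:ℂ)^(k-2*m) * S1 k (2*m) with hgdef
  have hcos : degCos (lam:ℂ) (y:ℂ) = egf g := by
    ext k
    simp only [degCos, PowerSeries.coeff_C_mul, map_add, degExp, egf, PowerSeries.coeff_mk,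
      hgdef]
    rw [← add_div, ← mul_div_assoc, cos_coeff S1 hS1]
  rw [hcos] at hg
  rw [egf_mul_coeff B g Bc hg n]
  apply Finset.sum_congr rfl
  intro k _
  simp only [hgdef]
  rw [Finset.mul_sum]
  apply Finset.sum_congr rfl
  intro m _
  ring
end

section
/- For every nonnegative integer n, $\sum_{k=0}^n \lambda^{n-k} B_{k,\lambda}^{(c)}(x,y) S_2(n,k) = \sum_{m=0}^n \sum_{l=0}^{\lfloor m/2\rfloor} \frac{\lambda^{n-m}}{n-m+1}\binom{n}{m}\binom{m}{2l}(-1)^l y^{2l} B_{m-2l}(x)$, where $S_2(n,k)$ are Stirling numbers of the second kind and $B_j(x)$ are the type 2 Bernoulli polynomials. -/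
open PowerSeries Finset Complex

namespace Stmt7Aux

/-- `g_λ = Σ λ^n t^n/(n+1)!`,  so that `X * g_λ = (e^{λt}-1)/λ`. -/
noncomputable def gS (l : ℂ) : PowerSeries ℂ := PowerSeries.mk fun n => l ^ n / (n+1).factorial

noncomputable def hS (l : ℂ) : PowerSeries ℂ := PowerSeries.X * gS l

lemma coeff_egf (f : ℕ → ℂ) (n : ℕ) : PowerSeries.coeff (R := ℂ) n (egf f) = f n / n.factorial :=
  PowerSeries.coeff_mk _ _

lemma coeff_expS (a : ℂ) (n : ℕ) : PowerSeries.coeff (R := ℂ) n (expS a) = a ^ n / n.factorial := by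
  rw [expS]; exact coeff_egf _ n

lemma coeff_hS_zero (l : ℂ) : PowerSeries.coeff (R := ℂ) 0 (hS l) = 0 := by
  simp [hS, PowerSeries.coeff_mul]

lemma constantCoeff_hS (l : ℂ) : PowerSeries.constantCoeff (R := ℂ) (hS l) = 0 := by
  rw [← PowerSeries.coeff_zero_eq_constantCoeff_apply]; exact coeff_hS_zero l

lemma coeff_hS_succ (l : ℂ) (n : ℕ) :
    PowerSeries.coeff (R := ℂ) (n+1) (hS l) = l ^ n / (n+1).factorial := by
  rw [hS, PowerSeries.coeff_succ_X_mul, gS, PowerSeries.coeff_mk]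

lemma C_mul_hS (l : ℂ) : PowerSeries.C (R := ℂ) l * hS l = expS l - 1 := by
  ext n
  cases n with
  | zero =>
      rw [PowerSeries.coeff_C_mul, coeff_hS_zero, map_sub]
      simp [expS, egf, PowerSeries.coeff_mk]
  | succ n =>
      rw [PowerSeries.coeff_C_mul, coeff_hS_succ, map_sub, coeff_expS]
      simp [Nat.factorial_succ, pow_succ]
      ring

/-- `e^t - 1 = X * u` with `u = Σ t^n/(n+1)!`. -/
lemma expS_one_sub_one : expS 1 - 1 = PowerSeries.X * gS 1 := by
  have := C_mul_hS 1
  rw [map_one, one_mul, hS] at this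
  exact this.symm

lemma rescale_expS (l : ℂ) : PowerSeries.rescale l (expS 1) = expS l := by
  ext n
  rw [PowerSeries.coeff_rescale, coeff_expS, coeff_expS, one_pow]
  rw [mul_one_div]


lemma dff_succ (l a : ℂ) (k : ℕ) : dff l a (k+1) = dff l a k * (a - k * l) := by
  rw [dff, dff, Finset.prod_range_succ]

lemma dff_zero (l a : ℂ) : dff l a 0 = 1 := by rw [dff, Finset.prod_range_zero]

section S2facts

variable (S2 : ℕ → ℕ → ℂ)
  (hS2 : ∀ k, (expS 1 - 1) ^ k = PowerSeries.C (R := ℂ) (Nat.factorial k) * egf (fun n => S2 n k))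

include hS2

lemma coeff_pow_sub (n k : ℕ) :
    PowerSeries.coeff (R := ℂ) n ((expS 1 - 1) ^ k) = k.factorial * (S2 n k / n.factorial) := by
  rw [hS2 k, PowerSeries.coeff_C_mul, coeff_egf]

lemma S2_diag (n : ℕ) : S2 n n = 1 := by
  have h1 : PowerSeries.coeff (R := ℂ) n ((expS 1 - 1) ^ n) = 1 := by
    rw [expS_one_sub_one, mul_pow]
    have hXp := PowerSeries.coeff_X_pow_mul (gS 1 ^ n) n 0
    rw [zero_add] at hXp
    rw [hXp, PowerSeries.coeff_zero_eq_constantCoeff_apply, map_pow]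
    have : PowerSeries.constantCoeff (R := ℂ) (gS 1) = 1 := by
      rw [← PowerSeries.coeff_zero_eq_constantCoeff_apply, gS, PowerSeries.coeff_mk]
      norm_num
    rw [this, one_pow]
  rw [coeff_pow_sub S2 hS2] at h1
  have hn : (n.factorial : ℂ) ≠ 0 := Nat.cast_ne_zero.mpr n.factorial_ne_zero
  field_simp at h1
  exact h1

lemma S2_eq_zero {n k : ℕ} (h : n < k) : S2 n k = 0 := by
  have h1 : PowerSeries.coeff (R := ℂ) n ((expS 1 - 1) ^ k) = 0 := by
    rw [expS_one_sub_one, mul_pow]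
    exact PowerSeries.X_pow_dvd_iff.mp (Dvd.intro _ rfl) n h
  rw [coeff_pow_sub S2 hS2] at h1
  have hk : (k.factorial : ℂ) ≠ 0 := Nat.cast_ne_zero.mpr k.factorial_ne_zero
  have hn : (n.factorial : ℂ) ≠ 0 := Nat.cast_ne_zero.mpr n.factorial_ne_zero
  field_simp at h1
  exact (mul_eq_zero.mp (h1.trans (mul_zero _))).resolve_left hk

lemma S2_zero_right (n : ℕ) : S2 (n+1) 0 = 0 := by
  have h1 : PowerSeries.coeff (R := ℂ) (n+1) ((expS 1 - 1) ^ 0) = 0 := by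
    rw [pow_zero]
    simp [PowerSeries.coeff_one]
  rw [coeff_pow_sub S2 hS2] at h1
  have hn : ((n+1).factorial : ℂ) ≠ 0 := Nat.cast_ne_zero.mpr (n+1).factorial_ne_zero
  field_simp at h1
  simpa using h1

omit hS2 in
lemma derivative_expS_one : d⁄dX ℂ (expS 1) = expS 1 := by
  ext m
  rw [PowerSeries.coeff_derivative, coeff_expS, coeff_expS, one_pow, one_pow]
  rw [Nat.factorial_succ]
  push_cast
  have h1 : ((m.factorial : ℂ)) ≠ 0 := Nat.cast_ne_zero.mpr m.factorial_ne_zero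
  have h2 : ((m:ℂ) + 1) ≠ 0 := Nat.cast_add_one_ne_zero m
  field_simp

lemma S2_rec (n k : ℕ) : S2 (n+1) (k+1) = (k+1) * S2 n (k+1) + S2 n k := by
  have hDe : d⁄dX ℂ (expS 1 - 1) = expS 1 := by
    rw [map_sub, derivative_expS_one]
    simp
  have hD := Derivation.leibniz_pow (d⁄dX ℂ) (expS 1 - 1) (k+1)
  rw [Nat.add_sub_cancel, hDe] at hD
  have hsplit : (expS 1 - 1) ^ k • expS 1 = (expS 1 - 1)^(k+1) + (expS 1 - 1)^k := by
    rw [smul_eq_mul]; ring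
  rw [hsplit] at hD
  have hc := congrArg (PowerSeries.coeff (R := ℂ) n) hD
  rw [PowerSeries.coeff_derivative, map_nsmul, map_add, coeff_pow_sub S2 hS2,
    coeff_pow_sub S2 hS2, coeff_pow_sub S2 hS2, nsmul_eq_mul] at hc
  have h1 : ((n.factorial : ℂ)) ≠ 0 := Nat.cast_ne_zero.mpr n.factorial_ne_zero
  have h3 : ((k.factorial : ℂ)) ≠ 0 := Nat.cast_ne_zero.mpr k.factorial_ne_zero
  have hfac : (((n+1).factorial : ℂ)) = ((n:ℂ)+1) * n.factorial := by
    rw [Nat.factorial_succ]; push_cast; ring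
  have hfacK : (((k+1).factorial : ℂ)) = ((k:ℂ)+1) * k.factorial := by
    rw [Nat.factorial_succ]; push_cast; ring
  rw [hfac, hfacK] at hc
  push_cast at hc
  have hn1 : ((n:ℂ)+1) ≠ 0 := Nat.cast_add_one_ne_zero n
  have hk1 : ((k:ℂ)+1) ≠ 0 := Nat.cast_add_one_ne_zero k
  field_simp at hc
  have hcne : ((k:ℂ)+1) * (k.factorial : ℂ) * (((n:ℂ)+1) * (n.factorial : ℂ)) ≠ 0 :=
    mul_ne_zero (mul_ne_zero hk1 h3) (mul_ne_zero hn1 h1)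
  apply mul_left_cancel₀ hcne
  linear_combination ((k:ℂ)+1) * (k.factorial : ℂ) * (((n:ℂ)+1) * (n.factorial : ℂ)) * hc


/-- Key identity: `Σ_k (a)_{k,λ} λ^{n-k} S2(n,k) = a^n`. -/
lemma key_identity (l a : ℂ) (n : ℕ) :
    ∑ k ∈ Finset.range (n+1), dff l a k * l ^ (n-k) * S2 n k = a ^ n := by
  induction n with
  | zero =>
      rw [Finset.sum_range_one, dff_zero, S2_diag S2 hS2 0]
      simp
  | succ n ih =>
      set G : ℕ → ℂ := fun j => (j:ℂ) * dff l a j * l ^ (n+1-j) * S2 n j with hG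
      have hterm : ∀ k ∈ Finset.range (n+1),
          dff l a (k+1) * l ^ (n+1-(k+1)) * S2 (n+1) (k+1)
            = G (k+1) + ((dff l a k * l ^ (n-k) * S2 n k) * a - G k) := by
        intro k hk
        rw [Finset.mem_range] at hk
        have hk' : k ≤ n := Nat.lt_succ_iff.mp hk
        have e1 : n + 1 - (k+1) = n - k := by omega
        have e2 : n + 1 - k = (n - k) + 1 := by omega
        rw [dff_succ, S2_rec S2 hS2, hG]
        simp only [e1, e2]
        rw [dff_succ]
        push_cast
        ring
      have hsum0 : ∑ k ∈ Finset.range (n+2), dff l a k * l ^ (n+1-k) * S2 (n+1) k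
          = ∑ k ∈ Finset.range (n+1), dff l a (k+1) * l ^ (n+1-(k+1)) * S2 (n+1) (k+1)
            + dff l a 0 * l ^ (n+1-0) * S2 (n+1) 0 := Finset.sum_range_succ' _ _
      have hG0 : ∑ k ∈ Finset.range (n+1), G (k+1) = ∑ k ∈ Finset.range (n+1), G k := by
        have h1 : ∑ k ∈ Finset.range (n+2), G k
            = ∑ k ∈ Finset.range (n+1), G (k+1) + G 0 := Finset.sum_range_succ' _ _
        have h2 : ∑ k ∈ Finset.range (n+2), G k
            = ∑ k ∈ Finset.range (n+1), G k + G (n+1) := Finset.sum_range_succ _ _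
        have hGzero : G 0 = 0 := by simp [hG]
        have hGtop : G (n+1) = 0 := by
          simp [hG, S2_eq_zero S2 hS2 (Nat.lt_succ_self n)]
        rw [hGzero, add_zero] at h1
        rw [hGtop, add_zero] at h2
        rw [← h1, h2]
      calc ∑ k ∈ Finset.range (n+1+1), dff l a k * l ^ (n+1-k) * S2 (n+1) k
          = ∑ k ∈ Finset.range (n+1), dff l a (k+1) * l ^ (n+1-(k+1)) * S2 (n+1) (k+1) := by
            rw [hsum0, S2_zero_right S2 hS2, mul_zero, add_zero]
        _ = ∑ k ∈ Finset.range (n+1), (G (k+1) + ((dff l a k * l ^ (n-k) * S2 n k) * a - G k)) :=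
            Finset.sum_congr rfl hterm
        _ = ∑ k ∈ Finset.range (n+1), G (k+1)
              + ((∑ k ∈ Finset.range (n+1), dff l a k * l ^ (n-k) * S2 n k) * a
                - ∑ k ∈ Finset.range (n+1), G k) := by
            rw [Finset.sum_add_distrib, Finset.sum_sub_distrib, Finset.sum_mul]
        _ = a ^ n * a := by rw [hG0, ih]; ring
        _ = a ^ (n+1) := by rw [pow_succ]

end S2facts


section Pcomp

lemma coeff_pow_eq_zero {h : PowerSeries ℂ} (hh : PowerSeries.constantCoeff (R := ℂ) h = 0)
    {n k : ℕ} (hnk : n < k) : PowerSeries.coeff (R := ℂ) n (h ^ k) = 0 := by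
  have hdvd : (PowerSeries.X : PowerSeries ℂ) ^ k ∣ h ^ k :=
    pow_dvd_pow_of_dvd (PowerSeries.X_dvd_iff.mpr hh) k
  exact PowerSeries.X_pow_dvd_iff.mp hdvd n hnk

/-- Composition `F ∘ h` of power series, for `h` with zero constant term. -/
noncomputable def pcomp (h F : PowerSeries ℂ) : PowerSeries ℂ :=
  PowerSeries.mk fun n =>
    PowerSeries.coeff (R := ℂ) n (Polynomial.aeval h (PowerSeries.trunc (n+1) F))

lemma coeff_aeval {h : PowerSeries ℂ} (hh : PowerSeries.constantCoeff (R := ℂ) h = 0)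
    (P : Polynomial ℂ) (n : ℕ) :
    PowerSeries.coeff (R := ℂ) n (Polynomial.aeval h P)
      = ∑ k ∈ Finset.range (n+1), P.coeff k * PowerSeries.coeff (R := ℂ) n (h ^ k) := by
  rw [Polynomial.aeval_eq_sum_range, map_sum]
  simp_rw [LinearMap.map_smul, smul_eq_mul]
  set f : ℕ → ℂ := fun i => P.coeff i * PowerSeries.coeff (R := ℂ) n (h ^ i) with hf
  have h1 : ∑ i ∈ Finset.range (P.natDegree + 1), f i
      = ∑ i ∈ Finset.range (max (P.natDegree + 1) (n+1)), f i := by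
    apply Finset.sum_subset (Finset.range_subset_range.mpr (le_max_left _ _))
    intro i _ hi
    rw [Finset.mem_range, not_lt] at hi
    have : P.natDegree < i := by omega
    rw [hf]
    simp only []
    rw [Polynomial.coeff_eq_zero_of_natDegree_lt this, zero_mul]
  have h2 : ∑ i ∈ Finset.range (n + 1), f i
      = ∑ i ∈ Finset.range (max (P.natDegree + 1) (n+1)), f i := by
    apply Finset.sum_subset (Finset.range_subset_range.mpr (le_max_right _ _))
    intro i _ hi
    rw [Finset.mem_range, not_lt] at hi
    have : n < i := by omega
    rw [hf]
    simp only []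
    rw [coeff_pow_eq_zero hh this, mul_zero]
  rw [h1, ← h2]

lemma coeff_pcomp {h : PowerSeries ℂ} (hh : PowerSeries.constantCoeff (R := ℂ) h = 0)
    (F : PowerSeries ℂ) (n : ℕ) :
    PowerSeries.coeff (R := ℂ) n (pcomp h F)
      = ∑ k ∈ Finset.range (n+1), PowerSeries.coeff (R := ℂ) k F * PowerSeries.coeff (R := ℂ) n (h ^ k) := by
  rw [pcomp, PowerSeries.coeff_mk, coeff_aeval hh]
  apply Finset.sum_congr rfl
  intro k hk
  rw [Finset.mem_range] at hk
  rw [PowerSeries.coeff_trunc, if_pos hk]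

lemma pcomp_mul {h : PowerSeries ℂ} (hh : PowerSeries.constantCoeff (R := ℂ) h = 0)
    (F G : PowerSeries ℂ) : pcomp h (F * G) = pcomp h F * pcomp h G := by
  ext n
  have hfact : ∀ (W : PowerSeries ℂ) (m : ℕ), m ≤ n →
      PowerSeries.coeff (R := ℂ) m (Polynomial.aeval h (PowerSeries.trunc (n+1) W))
        = PowerSeries.coeff (R := ℂ) m (pcomp h W) := by
    intro W m hm
    rw [coeff_pcomp hh, coeff_aeval hh]
    apply Finset.sum_congr rfl
    intro i hi
    rw [Finset.mem_range] at hi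
    rw [PowerSeries.coeff_trunc, if_pos (by omega)]
  have stepA : PowerSeries.coeff (R := ℂ) n (pcomp h (F * G))
      = PowerSeries.coeff (R := ℂ) n (Polynomial.aeval h
          (PowerSeries.trunc (n+1) F * PowerSeries.trunc (n+1) G)) := by
    rw [coeff_pcomp hh, coeff_aeval hh]
    apply Finset.sum_congr rfl
    intro k hk
    rw [Finset.mem_range] at hk
    have hPQ : (PowerSeries.trunc (n+1) F * PowerSeries.trunc (n+1) G).coeff k
        = PowerSeries.coeff (R := ℂ) k (F * G) := by
      rw [← Polynomial.coeff_coe, Polynomial.coe_mul,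
        ← PowerSeries.coeff_mul_eq_coeff_trunc_mul_trunc F G hk]
    rw [hPQ]
  rw [stepA, map_mul, PowerSeries.coeff_mul, PowerSeries.coeff_mul]
  apply Finset.sum_congr rfl
  intro ab hab
  rw [Finset.HasAntidiagonal.mem_antidiagonal] at hab
  rw [hfact F ab.1 (by omega), hfact G ab.2 (by omega)]

lemma pcomp_add {h : PowerSeries ℂ} (hh : PowerSeries.constantCoeff (R := ℂ) h = 0)
    (F G : PowerSeries ℂ) : pcomp h (F + G) = pcomp h F + pcomp h G := by
  ext n
  rw [map_add, coeff_pcomp hh, coeff_pcomp hh, coeff_pcomp hh, ← Finset.sum_add_distrib]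
  apply Finset.sum_congr rfl
  intro k _
  rw [map_add, add_mul]

lemma pcomp_sub {h : PowerSeries ℂ} (hh : PowerSeries.constantCoeff (R := ℂ) h = 0)
    (F G : PowerSeries ℂ) : pcomp h (F - G) = pcomp h F - pcomp h G := by
  ext n
  rw [map_sub, coeff_pcomp hh, coeff_pcomp hh, coeff_pcomp hh, ← Finset.sum_sub_distrib]
  apply Finset.sum_congr rfl
  intro k _
  rw [map_sub, sub_mul]

lemma pcomp_C {h : PowerSeries ℂ} (hh : PowerSeries.constantCoeff (R := ℂ) h = 0)
    (c : ℂ) : pcomp h (PowerSeries.C (R := ℂ) c) = PowerSeries.C (R := ℂ) c := by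
  ext n
  rw [coeff_pcomp hh]
  rw [Finset.sum_eq_single 0]
  · rw [pow_zero]
    simp [PowerSeries.coeff_one, PowerSeries.coeff_C]
  · intro k _ hk
    rw [PowerSeries.coeff_C, if_neg hk, zero_mul]
  · intro habs
    exact absurd (Finset.mem_range.mpr (Nat.succ_pos n)) habs

lemma pcomp_X {h : PowerSeries ℂ} (hh : PowerSeries.constantCoeff (R := ℂ) h = 0) :
    pcomp h PowerSeries.X = h := by
  ext n
  rw [coeff_pcomp hh]
  rw [Finset.sum_eq_single 1]
  · rw [pow_one, PowerSeries.coeff_X, if_pos rfl, one_mul]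
  · intro k _ hk
    rw [PowerSeries.coeff_X, if_neg hk, zero_mul]
  · intro habs
    rw [Finset.mem_range, not_lt] at habs
    have hn : n = 0 := by omega
    subst hn
    rw [pow_one, PowerSeries.coeff_X, if_pos rfl, one_mul,
      PowerSeries.coeff_zero_eq_constantCoeff_apply, hh]

end Pcomp


section Main

variable (S2 : ℕ → ℕ → ℂ)
  (hS2 : ∀ k, (expS 1 - 1) ^ k = PowerSeries.C (R := ℂ) (Nat.factorial k) * egf (fun n => S2 n k))

include hS2

lemma coeff_hS_pow (l : ℂ) {n k : ℕ} (hkn : k ≤ n) :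
    PowerSeries.coeff (R := ℂ) n (hS l ^ k)
      = l ^ (n-k) * k.factorial * (S2 n k / n.factorial) := by
  by_cases hl : l = 0
  · subst hl
    have hg : gS 0 = 1 := by
      ext m
      rw [gS, PowerSeries.coeff_mk, PowerSeries.coeff_one]
      cases m with
      | zero => norm_num
      | succ m => norm_num
    have hX : hS 0 = PowerSeries.X := by rw [hS, hg, mul_one]
    rw [hX, PowerSeries.coeff_X_pow]
    rcases Nat.lt_or_ge k n with hlt | hge
    · rw [if_neg (by omega)]
      have : (0:ℂ) ^ (n-k) = 0 := by
        apply zero_pow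
        omega
      rw [this, zero_mul, zero_mul]
    · have hkn' : k = n := le_antisymm hkn hge
      subst hkn'
      rw [if_pos rfl, Nat.sub_self, pow_zero, one_mul, S2_diag S2 hS2]
      have : ((k.factorial : ℂ)) ≠ 0 := Nat.cast_ne_zero.mpr k.factorial_ne_zero
      field_simp
  · have hC : (PowerSeries.C (R := ℂ) l * hS l) ^ k = (expS l - 1) ^ k := by rw [C_mul_hS]
    have hres : (expS l - 1) ^ k = PowerSeries.rescale l ((expS 1 - 1) ^ k) := by
      rw [map_pow, map_sub, map_one, rescale_expS]
    have hc := congrArg (PowerSeries.coeff (R := ℂ) n) (hC.trans hres)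
    rw [mul_pow, ← map_pow, PowerSeries.coeff_C_mul, PowerSeries.coeff_rescale,
      coeff_pow_sub S2 hS2] at hc
    apply mul_left_cancel₀ (pow_ne_zero k hl)
    rw [hc]
    rw [← pow_sub_mul_pow l hkn]
    ring

lemma pcomp_degExp (l a : ℂ) : pcomp (hS l) (degExp l a) = expS a := by
  ext n
  rw [coeff_pcomp (constantCoeff_hS l), coeff_expS]
  have hterm : ∀ k ∈ Finset.range (n+1),
      PowerSeries.coeff (R := ℂ) k (degExp l a) * PowerSeries.coeff (R := ℂ) n (hS l ^ k)
        = dff l a k * l ^ (n-k) * S2 n k * (1 / n.factorial) := by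
    intro k hk
    rw [Finset.mem_range] at hk
    rw [degExp, coeff_egf, coeff_hS_pow S2 hS2 l (by omega : k ≤ n)]
    have hkf : ((k.factorial : ℂ)) ≠ 0 := Nat.cast_ne_zero.mpr k.factorial_ne_zero
    calc dff l a k / k.factorial * (l ^ (n-k) * k.factorial * (S2 n k / n.factorial))
        = (dff l a k * l ^ (n-k) * S2 n k * (1 / n.factorial))
            * ((k.factorial : ℂ) / k.factorial) := by ring
      _ = dff l a k * l ^ (n-k) * S2 n k * (1 / n.factorial) := by
          rw [div_self hkf, mul_one]
  rw [Finset.sum_congr rfl hterm, ← Finset.sum_mul, key_identity S2 hS2, mul_one_div]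

end Main


lemma coeff_mul_range (P Q : PowerSeries ℂ) (n : ℕ) :
    PowerSeries.coeff (R := ℂ) n (P * Q)
      = ∑ k ∈ Finset.range (n+1), PowerSeries.coeff (R := ℂ) k P * PowerSeries.coeff (R := ℂ) (n-k) Q := by
  rw [PowerSeries.coeff_mul, Finset.Nat.sum_antidiagonal_eq_sum_range_succ_mk]

lemma sum_even (m : ℕ) (f : ℕ → ℂ) (hodd : ∀ j, Odd j → f j = 0) :
    ∑ j ∈ Finset.range (m+1), f j = ∑ l ∈ Finset.range (m/2+1), f (2*l) := by
  classical
  rw [← Finset.sum_filter_of_ne (p := fun j => Even j)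
    (fun x _ hx => by
      by_contra hev
      exact hx (hodd x (Nat.not_even_iff_odd.mp hev)))]
  apply Finset.sum_nbij' (fun j => j / 2) (fun l => 2 * l)
  · intro a ha
    rw [Finset.mem_filter, Finset.mem_range] at ha
    rw [Finset.mem_range]
    have := Nat.div_le_div_right (c := 2) (Nat.lt_succ_iff.mp ha.1)
    omega
  · intro a ha
    rw [Finset.mem_range] at ha
    rw [Finset.mem_filter, Finset.mem_range]
    constructor
    · have h1 : a ≤ m / 2 := by omega
      have := Nat.mul_le_mul_left 2 h1
      have h2 : 2 * (m/2) ≤ m := Nat.mul_div_le m 2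
      omega
    · exact even_two_mul a
  · intro a ha
    rw [Finset.mem_filter] at ha
    obtain ⟨c, hc⟩ := ha.2
    omega
  · intro a _
    omega
  · intro a ha
    rw [Finset.mem_filter] at ha
    obtain ⟨c, hc⟩ := ha.2
    congr 1
    omega

noncomputable def cc (y : ℝ) : ℕ → ℂ :=
  fun j => ((Complex.I * y) ^ j + (-(Complex.I * y)) ^ j) / 2

lemma cosE_eq (y : ℝ) :
    PowerSeries.C (R := ℂ) (1/2) * (expS (Complex.I * y) + expS (-(Complex.I * y))) = egf (cc y) := by
  ext n
  rw [PowerSeries.coeff_C_mul, map_add, coeff_expS, coeff_expS, coeff_egf, cc]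
  ring

lemma cc_even (y : ℝ) (l' : ℕ) : cc y (2*l') = (-1)^l' * (y:ℂ)^(2*l') := by
  rw [cc]
  rw [Even.neg_pow (even_two_mul l')]
  rw [add_self_div_two, mul_pow, pow_mul, Complex.I_sq]

lemma cc_odd (y : ℝ) {j : ℕ} (hj : Odd j) : cc y j = 0 := by
  rw [cc, Odd.neg_pow hj, add_neg_cancel, zero_div]

lemma choose_fac (n m i : ℕ) (him : i ≤ m) (hmn : m ≤ n) :
    n.choose m * (m.choose i * (i.factorial * ((m-i).factorial * (n-m).factorial)))
      = n.factorial := by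
  have h1 := Nat.choose_mul_factorial_mul_factorial him
  have h2 := Nat.choose_mul_factorial_mul_factorial hmn
  calc n.choose m * (m.choose i * (i.factorial * ((m-i).factorial * (n-m).factorial)))
      = (m.choose i * i.factorial * (m-i).factorial) * (n.choose m * (n-m).factorial) := by ring
    _ = m.factorial * (n.choose m * (n-m).factorial) := by rw [h1]
    _ = n.choose m * m.factorial * (n-m).factorial := by ring
    _ = n.factorial := h2

lemma term_eq (n m i : ℕ) (him : i ≤ m) (hmn : m ≤ n) (l b c : ℂ) :
    (n.factorial : ℂ) * (c / i.factorial * (b / (m-i).factorial))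
        * (l ^ (n-m) / ((n-m+1).factorial))
      = l ^ (n-m) / ((n-m+1 : ℕ) : ℂ) * (n.choose m : ℂ) * (m.choose i : ℂ) * c * b := by
  have h1 : ((i.factorial : ℂ)) ≠ 0 := Nat.cast_ne_zero.mpr i.factorial_ne_zero
  have h2 : (((m-i).factorial : ℂ)) ≠ 0 := Nat.cast_ne_zero.mpr (m-i).factorial_ne_zero
  have h3 : (((n-m).factorial : ℂ)) ≠ 0 := Nat.cast_ne_zero.mpr (n-m).factorial_ne_zero
  have h4 : (((n-m+1 : ℕ)) : ℂ) ≠ 0 := Nat.cast_ne_zero.mpr (by omega)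
  have hfs : (((n-m+1).factorial : ℂ)) = ((n-m+1 : ℕ) : ℂ) * ((n-m).factorial : ℂ) := by
    rw [Nat.factorial_succ]
    push_cast
    ring
  have key : ((n.factorial : ℕ) : ℂ)
      = (n.choose m : ℂ) * ((m.choose i : ℂ)
          * ((i.factorial : ℂ) * (((m-i).factorial : ℂ) * ((n-m).factorial : ℂ)))) := by
    rw [← choose_fac n m i him hmn]
    push_cast
    ring
  rw [hfs, key]
  set A := ((n-m+1 : ℕ) : ℂ) with hA
  set F1 := ((i.factorial : ℕ) : ℂ) with hF1
  set F2 := (((m-i).factorial : ℕ) : ℂ) with hF2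
  set F3 := (((n-m).factorial : ℕ) : ℂ) with hF3
  field_simp

end Stmt7Aux

theorem stmt7 (lam x y : ℝ) (Bc B : ℕ → ℂ) (S2 : ℕ → ℕ → ℂ)
    (hBc : egf Bc * (degExp lam (1/2) - degExp lam (-(1/2))) =
      PowerSeries.X * degExp lam x * degCos lam y)
    (hB : egf B * (expS (1/2) - expS (-(1/2))) = PowerSeries.X * expS x)
    (hS2 : ∀ k, (expS 1 - 1) ^ k = PowerSeries.C (R := ℂ) (Nat.factorial k) * egf (fun n => S2 n k))
    (n : ℕ) :
    ∑ k ∈ Finset.range (n+1), (lam:ℂ)^(n-k) * Bc k * S2 n k =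
      ∑ m ∈ Finset.range (n+1), ∑ l ∈ Finset.range (m/2+1),
        (lam:ℂ)^(n-m) / ((n-m+1 : ℕ) : ℂ) * (n.choose m : ℂ) * (m.choose (2*l) : ℂ) *
          (-1)^l * (y:ℂ)^(2*l) * B (m-2*l) := by
  classical
  have hh := Stmt7Aux.constantCoeff_hS (lam : ℂ)
  have hhS : Stmt7Aux.hS (lam : ℂ) = PowerSeries.X * Stmt7Aux.gS (lam : ℂ) := rfl
  set cosE : PowerSeries ℂ :=
    PowerSeries.C (R := ℂ) (1/2) * (expS (Complex.I * y) + expS (-(Complex.I * y))) with hcosE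
  -- apply composition to hBc
  have hE1 : Stmt7Aux.pcomp (Stmt7Aux.hS (lam : ℂ)) (egf Bc) * (expS (1/2) - expS (-(1/2)))
      = Stmt7Aux.hS (lam : ℂ) * expS x * cosE := by
    have h0 := congrArg (Stmt7Aux.pcomp (Stmt7Aux.hS (lam : ℂ))) hBc
    rw [degCos] at h0
    simp only [Stmt7Aux.pcomp_mul hh, Stmt7Aux.pcomp_sub hh, Stmt7Aux.pcomp_add hh,
      Stmt7Aux.pcomp_C hh, Stmt7Aux.pcomp_X hh, Stmt7Aux.pcomp_degExp S2 hS2] at h0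
    exact h0
  have hSne : expS (1/2) - expS (-(1/2)) ≠ (0 : PowerSeries ℂ) := by
    intro h0
    have h1 := congrArg (PowerSeries.coeff (R := ℂ) 1) h0
    rw [map_sub, Stmt7Aux.coeff_expS, Stmt7Aux.coeff_expS, map_zero] at h1
    norm_num at h1
  have hE4 : Stmt7Aux.pcomp (Stmt7Aux.hS (lam : ℂ)) (egf Bc)
      = egf B * (Stmt7Aux.gS (lam : ℂ) * cosE) := by
    have hz : (Stmt7Aux.pcomp (Stmt7Aux.hS (lam : ℂ)) (egf Bc)
        - egf B * (Stmt7Aux.gS (lam : ℂ) * cosE)) * (expS (1/2) - expS (-(1/2))) = 0 := by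
      rw [sub_mul, hE1, hhS]
      have h2 : egf B * (Stmt7Aux.gS (lam : ℂ) * cosE) * (expS (1/2) - expS (-(1/2)))
          = (egf B * (expS (1/2) - expS (-(1/2)))) * (Stmt7Aux.gS (lam : ℂ) * cosE) := by
        ring
      rw [h2, hB]
      ring
    rcases mul_eq_zero.mp hz with h | h
    · exact sub_eq_zero.mp h
    · exact absurd h hSne
  have hL : ∑ k ∈ Finset.range (n+1), (lam:ℂ)^(n-k) * Bc k * S2 n k
      = (n.factorial : ℂ) * PowerSeries.coeff (R := ℂ) n
          (Stmt7Aux.pcomp (Stmt7Aux.hS (lam : ℂ)) (egf Bc)) := by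
    rw [Stmt7Aux.coeff_pcomp hh, Finset.mul_sum]
    apply Finset.sum_congr rfl
    intro k hk
    rw [Finset.mem_range] at hk
    rw [Stmt7Aux.coeff_egf, Stmt7Aux.coeff_hS_pow S2 hS2 (lam : ℂ) (show k ≤ n by omega)]
    have hkf : ((k.factorial : ℕ) : ℂ) ≠ 0 := Nat.cast_ne_zero.mpr k.factorial_ne_zero
    have hnf : ((n.factorial : ℕ) : ℂ) ≠ 0 := Nat.cast_ne_zero.mpr n.factorial_ne_zero
    field_simp
  have hR : (n.factorial : ℂ) * PowerSeries.coeff (R := ℂ) n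
        (egf B * (Stmt7Aux.gS (lam : ℂ) * cosE))
      = ∑ m ∈ Finset.range (n+1), ∑ l ∈ Finset.range (m/2+1),
          (lam:ℂ)^(n-m) / ((n-m+1 : ℕ) : ℂ) * (n.choose m : ℂ) * (m.choose (2*l) : ℂ) *
            (-1)^l * (y:ℂ)^(2*l) * B (m-2*l) := by
    have hprod : egf B * (Stmt7Aux.gS (lam : ℂ) * cosE)
        = (egf (Stmt7Aux.cc y) * egf B) * Stmt7Aux.gS (lam : ℂ) := by
      rw [hcosE, ← Stmt7Aux.cosE_eq]
      ring
    rw [hprod, Stmt7Aux.coeff_mul_range, Finset.mul_sum]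
    apply Finset.sum_congr rfl
    intro m hm
    rw [Finset.mem_range] at hm
    have hmn : m ≤ n := by omega
    have hg : PowerSeries.coeff (R := ℂ) (n-m) (Stmt7Aux.gS (lam : ℂ))
        = (lam:ℂ)^(n-m) / ((n-m+1).factorial) := by
      rw [Stmt7Aux.gS, PowerSeries.coeff_mk]
    rw [Stmt7Aux.coeff_mul_range, hg]
    simp only [Stmt7Aux.coeff_egf]
    rw [Finset.sum_mul, Finset.mul_sum]
    have heven := Stmt7Aux.sum_even m
      (fun i => (n.factorial : ℂ) * (Stmt7Aux.cc y i / i.factorial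
        * (B (m-i) / (m-i).factorial) * ((lam:ℂ)^(n-m) / ((n-m+1).factorial))))
      (fun j hj => by simp [Stmt7Aux.cc_odd y hj])
    rw [heven]
    apply Finset.sum_congr rfl
    intro l' hl'
    rw [Finset.mem_range] at hl'
    have h2l : 2*l' ≤ m := by omega
    simp only [Stmt7Aux.cc_even]
    linear_combination Stmt7Aux.term_eq n m (2*l') h2l hmn (lam : ℂ)
      (B (m-2*l')) ((-1)^l' * (y:ℂ)^(2*l'))
  rw [hL, hE4, hR]
end

section
/- For all nonnegative integers n and positive integers k, the type 2 degenerate Bernoulli numbers of negative order satisfy $\binom{n+k}{k} B_{n,\lambda}^{(-k)} = T_\lambda(n+k,k)$, where $T_\lambda(n,k)$ are the degenerate central factorial numbers of the second kind. -/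
open PowerSeries Finset Complex

theorem stmt10 (lam : ℝ) (k : ℕ) (hk : 0 < k) (Bneg T : ℕ → ℂ)
    (hB : (degExp lam (1/2) - degExp lam (-(1/2))) ^ k = PowerSeries.X ^ k * egf Bneg)
    (hT : (degExp lam (1/2) - degExp lam (-(1/2))) ^ k =
      PowerSeries.C (R := ℂ) (Nat.factorial k) * egf T)
    (n : ℕ) :
    ((n+k).choose k : ℂ) * Bneg n = T (n+k) := by
  have h := hB.symm.trans hT
  have hc := congrArg (PowerSeries.coeff (R := ℂ) (n + k)) h
  rw [PowerSeries.coeff_X_pow_mul, PowerSeries.coeff_C_mul] at hc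
  simp only [egf, PowerSeries.coeff_mk] at hc
  have hn : (n.factorial : ℂ) ≠ 0 := Nat.cast_ne_zero.mpr n.factorial_ne_zero
  have hk' : (k.factorial : ℂ) ≠ 0 := Nat.cast_ne_zero.mpr k.factorial_ne_zero
  have hnk : ((n + k).factorial : ℂ) ≠ 0 := Nat.cast_ne_zero.mpr (n + k).factorial_ne_zero
  have hch : ((n + k).choose k : ℂ) * (k.factorial : ℂ) * (n.factorial : ℂ)
      = ((n + k).factorial : ℂ) := by
    push_cast [← Nat.add_choose_mul_factorial_mul_factorial n k]
    ring
  field_simp at hc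
  have key : ((n+k).choose k : ℂ) * Bneg n * ((k.factorial : ℂ) * n.factorial)
      = T (n+k) * ((k.factorial : ℂ) * n.factorial) := by
    linear_combination hc + Bneg n * hch
  exact mul_right_cancel₀ (mul_ne_zero hk' hn) key
end
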